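/- Let ā(m) denote the number of cyclic signatures of length m. Then for all m ≥ 1, ā(m) = 1 + (1−√2)^m + (1+√2)^m, as an equality of real numbers. -/

import Mathlib

open scoped Classical

/-- The three-letter alphabet {uncovered, covered, occupied}. -/
inductive VState : Type
  | unc | cov | occ
  deriving DecidableEq

instance instFintypeVState : Fintype VState where
  elems := {VState.unc, VState.cov, VState.occ}
  complete := by intro x; cases x <;> simp

/-- A signature of length `m`: a string over {unc, cov, occ} with no adjacent
(unc, occ) or (occ, unc) pair. -/
def IsSignature {m : ℕ} (σ : Fin m → VState) : Prop :=
  ∀ i : Fin m, ∀ h : (i : ℕ) + 1 < m,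
    ¬(σ i = VState.unc ∧ σ ⟨(i : ℕ) + 1, h⟩ = VState.occ) ∧
    ¬(σ i = VState.occ ∧ σ ⟨(i : ℕ) + 1, h⟩ = VState.unc)

/-- A cyclic signature: a signature where the adjacency constraint is also imposed
on the pair (first symbol, last symbol). -/
def IsCycSignature {m : ℕ} (σ : Fin m → VState) : Prop :=
  IsSignature σ ∧ ∀ h : 0 < m,
    ¬(σ ⟨0, h⟩ = VState.unc ∧ σ ⟨m - 1, Nat.sub_lt h Nat.one_pos⟩ = VState.occ) ∧
    ¬(σ ⟨0, h⟩ = VState.occ ∧ σ ⟨m - 1, Nat.sub_lt h Nat.one_pos⟩ = VState.unc)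

/-- `ā(m)`: the number of cyclic signatures of length `m`. -/
noncomputable def numCycSig (m : ℕ) : ℕ :=
  Fintype.card {σ : Fin m → VState // IsCycSignature σ}

/-! ### Auxiliary development -/

/-- The allowed-adjacency relation. -/
def al (s t : VState) : Prop :=
  ¬(s = VState.unc ∧ t = VState.occ) ∧ ¬(s = VState.occ ∧ t = VState.unc)

instance (s t : VState) : Decidable (al s t) := by unfold al; infer_instance

lemma al_symm {s t : VState} (h : al s t) : al t s :=
  ⟨fun hh => h.2 ⟨hh.2, hh.1⟩, fun hh => h.1 ⟨hh.2, hh.1⟩⟩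

/-- Transfer matrix. -/
def Amat : Matrix VState VState ℕ := Matrix.of fun s t => if al s t then 1 else 0

/-- Walks of length `n` (with `n+1` vertices) from `s` to `t`. -/
noncomputable def WS (n : ℕ) (s t : VState) : Finset (Fin (n+1) → VState) :=
  Finset.univ.filter fun g => g ⟨0, Nat.succ_pos n⟩ = s ∧ g ⟨n, Nat.lt_succ_self n⟩ = t ∧
    ∀ k : ℕ, ∀ h : k + 1 < n + 1, al (g ⟨k, by omega⟩) (g ⟨k+1, h⟩)

lemma mem_WS {n : ℕ} {s t : VState} {g : Fin (n+1) → VState} :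
    g ∈ WS n s t ↔ g ⟨0, Nat.succ_pos n⟩ = s ∧ g ⟨n, Nat.lt_succ_self n⟩ = t ∧
      ∀ k : ℕ, ∀ h : k + 1 < n + 1, al (g ⟨k, by omega⟩) (g ⟨k+1, h⟩) := by
  simp [WS]

lemma WS_zero (s t : VState) : (WS 0 s t).card = if s = t then 1 else 0 := by
  split_ifs with h
  · subst h
    rw [Finset.card_eq_one]
    refine ⟨fun _ => s, ?_⟩
    ext g
    simp only [mem_WS, Finset.mem_singleton]
    constructor
    · rintro ⟨h1, -, -⟩
      funext k
      rwa [show k = ⟨0, Nat.succ_pos 0⟩ from Fin.ext (by omega)]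
    · rintro rfl
      exact ⟨rfl, rfl, fun k h => by omega⟩
  · rw [Finset.card_eq_zero, Finset.eq_empty_iff_forall_notMem]
    intro g hg
    rw [mem_WS] at hg
    exact h (hg.1.symm.trans hg.2.1)

lemma WS_succ (n : ℕ) (s t : VState) :
    (WS (n+1) s t).card = ∑ u : VState, (if al s u then 1 else 0) * (WS n u t).card := by
  rw [Finset.card_eq_sum_card_fiberwise (f := fun g => g ⟨1, by omega⟩) (t := Finset.univ)
    (fun g _ => Finset.mem_univ _)]
  refine Finset.sum_congr rfl fun u _ => ?_
  by_cases hu : al s u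
  · rw [if_pos hu, one_mul]
    refine Finset.card_bij'
      (fun g _ => fun k : Fin (n+1) => g ⟨k.1+1, by omega⟩)
      (fun g _ => fun k : Fin (n+2) => if hk : k.1 = 0 then s else g ⟨k.1-1, by omega⟩)
      ?_ ?_ ?_ ?_
    · intro g hg
      rw [Finset.mem_filter, mem_WS] at hg
      obtain ⟨⟨h0, hl, hch⟩, h1⟩ := hg
      rw [mem_WS]
      refine ⟨h1, hl, fun k h => ?_⟩
      exact hch (k+1) (by omega)
    · intro g hg
      rw [mem_WS] at hg
      obtain ⟨h0, hl, hch⟩ := hg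
      rw [Finset.mem_filter, mem_WS]
      refine ⟨⟨rfl, ?_, fun k h => ?_⟩, ?_⟩
      · exact hl
      · match k with
        | 0 => exact h0 ▸ hu
        | k+1 => exact hch k (by omega)
      · exact h0
    · intro g hg
      rw [Finset.mem_filter, mem_WS] at hg
      funext k
      match k with
      | ⟨0, hk⟩ => exact hg.1.1.symm
      | ⟨k+1, hk⟩ => rfl
    · intro g hg
      funext k
      rfl
  · rw [if_neg hu, zero_mul, Finset.card_eq_zero, Finset.eq_empty_iff_forall_notMem]
    intro g hg
    rw [Finset.mem_filter, mem_WS] at hg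
    obtain ⟨⟨h0, hl, hch⟩, h1⟩ := hg
    exact hu (h0 ▸ h1 ▸ hch 0 (by omega))

lemma Amat_pow (n : ℕ) (s t : VState) : (Amat ^ n) s t = (WS n s t).card := by
  induction n generalizing s t with
  | zero => rw [pow_zero, Matrix.one_apply, WS_zero]
  | succ n ih =>
    rw [pow_succ', Matrix.mul_apply, WS_succ]
    exact Finset.sum_congr rfl fun u _ => by rw [ih]; rfl


def tA (n : ℕ) : ℕ := ∑ s : VState, (Amat ^ n) s s

lemma CH : ∀ s t : VState,
    (Amat^3) s t + Amat s t + (1 : Matrix VState VState ℕ) s t = 3 * (Amat^2) s t := by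
  decide

lemma tA_rec (n : ℕ) : tA (n+3) + tA (n+1) + tA n = 3 * tA (n+2) := by
  have key : ∀ s t : VState,
      (Amat^(n+3)) s t + (Amat^(n+1)) s t + (Amat^n) s t = 3 * ((Amat^(n+2)) s t) := by
    intro s t
    have e3 : (Amat^(n+3)) s t = ∑ u : VState, (Amat^3) s u * (Amat^n) u t := by
      rw [show n+3 = 3+n from by omega, pow_add, Matrix.mul_apply]
    have e1 : (Amat^(n+1)) s t = ∑ u : VState, Amat s u * (Amat^n) u t := by
      rw [show n+1 = 1+n from by omega, pow_add, pow_one, Matrix.mul_apply]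
    have e0 : (Amat^n) s t = ∑ u : VState, (1 : Matrix VState VState ℕ) s u * (Amat^n) u t := by
      conv_lhs => rw [← Matrix.one_mul (Amat^n)]
      rw [Matrix.mul_apply]
    have e2 : (Amat^(n+2)) s t = ∑ u : VState, (Amat^2) s u * (Amat^n) u t := by
      rw [show n+2 = 2+n from by omega, pow_add, Matrix.mul_apply]
    rw [e3, e1, e0, e2, ← Finset.sum_add_distrib, ← Finset.sum_add_distrib, Finset.mul_sum]
    refine Finset.sum_congr rfl fun u _ => ?_
    rw [← add_mul, ← add_mul, CH s u, mul_assoc]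
  simp only [tA]
  rw [← Finset.sum_add_distrib, ← Finset.sum_add_distrib, Finset.mul_sum]
  exact Finset.sum_congr rfl fun s _ => key s s

noncomputable def fR (m : ℕ) : ℝ := 1 + (1 - Real.sqrt 2)^m + (1 + Real.sqrt 2)^m

lemma fR_rec (n : ℕ) : fR (n+3) + fR (n+1) + fR n = 3 * fR (n+2) := by
  have h2 : Real.sqrt 2 ^ 2 = 2 := Real.sq_sqrt (by norm_num)
  have h3 : Real.sqrt 2 ^ 3 = 2 * Real.sqrt 2 := by
    rw [pow_succ, h2]
  have key : ∀ x : ℝ, x^3 + x + 1 = 3 * x^2 → x^(n+3) + x^(n+1) + x^n = 3 * x^(n+2) := by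
    intro x hx
    calc x^(n+3) + x^(n+1) + x^n = x^n * (x^3 + x + 1) := by ring
      _ = x^n * (3 * x^2) := by rw [hx]
      _ = 3 * x^(n+2) := by ring
  have k1 := key 1 (by norm_num)
  have k2 := key (1 - Real.sqrt 2) (by linear_combination -h3)
  have k3 := key (1 + Real.sqrt 2) (by linear_combination h3)
  simp only [fR]
  linarith

lemma tA_closed : ∀ n : ℕ, (tA (n+1) : ℝ) = fR (n+1) := by
  have h2 : Real.sqrt 2 ^ 2 = 2 := Real.sq_sqrt (by norm_num)
  intro n
  induction n using Nat.strong_induction_on with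
  | _ n ih =>
    match n with
    | 0 =>
      rw [show tA 1 = 3 from by decide]
      simp only [fR]
      push_cast
      ring
    | 1 =>
      rw [show tA 2 = 7 from by decide]
      simp only [fR]
      push_cast
      linear_combination -2 * h2
    | 2 =>
      rw [show tA 3 = 15 from by decide]
      simp only [fR]
      push_cast
      linear_combination -6 * h2
    | (k+3) =>
      have r1 := tA_rec (k+1)
      have f1 := fR_rec (k+1)
      have i1 := ih (k+2) (by omega)
      have i2 := ih (k+1) (by omega)
      have i3 := ih k (by omega)
      have r1' := congrArg (Nat.cast : ℕ → ℝ) r1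
      push_cast at r1'
      have : (k+1)+3 = (k+3)+1 := by omega
      rw [this] at r1' f1
      have e2 : (k+1)+2 = (k+2)+1 := by omega
      rw [e2] at r1' f1
      have e1 : (k+1)+1 = (k+1)+1 := rfl
      linarith


lemma numCycSig_eq (n : ℕ) : numCycSig (n+1) = ∑ s : VState, (WS (n+1) s s).card := by
  have h1 : numCycSig (n+1) =
      (Finset.univ.filter fun σ : Fin (n+1) → VState => IsCycSignature σ).card := by
    simp only [numCycSig]
    exact Fintype.card_of_subtype _ (by simp)
  rw [h1, Finset.card_eq_sum_card_fiberwise (f := fun σ => σ ⟨0, Nat.succ_pos n⟩)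
    (t := Finset.univ) (fun _ _ => Finset.mem_univ _)]
  refine Finset.sum_congr rfl fun s _ => ?_
  refine Finset.card_bij'
    (fun σ _ => fun k : Fin (n+2) => if h : k.1 < n+1 then σ ⟨k.1, h⟩ else σ ⟨0, Nat.succ_pos n⟩)
    (fun g _ => fun k : Fin (n+1) => g ⟨k.1, by omega⟩) ?_ ?_ ?_ ?_
  · intro σ hσ
    simp only [Finset.mem_filter, Finset.mem_univ, true_and] at hσ
    obtain ⟨⟨hsig, hcycl⟩, h0⟩ := hσ
    rw [mem_WS]
    refine ⟨?_, ?_, fun k h => ?_⟩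
    all_goals beta_reduce
    · rw [dif_pos (by omega : 0 < n+1)]; exact h0
    · rw [dif_neg (by omega : ¬ (n+1 < n+1))]; exact h0
    · by_cases hk : k + 1 < n + 1
      · rw [dif_pos (by omega : k < n+1), dif_pos hk]
        exact hsig ⟨k, by omega⟩ hk
      · have hkn : k = n := by omega
        subst hkn
        rw [dif_pos (by omega : k < k+1), dif_neg (by omega : ¬ (k+1 < k+1))]
        exact al_symm (hcycl (Nat.succ_pos k))
  · intro g hg
    rw [mem_WS] at hg
    obtain ⟨h0, hl, hch⟩ := hg
    simp only [Finset.mem_filter, Finset.mem_univ, true_and]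
    have key : al (g ⟨n, by omega⟩) s := by
      have := hch n (by omega)
      rwa [show g ⟨n+1, by omega⟩ = s from hl] at this
    refine ⟨⟨fun i h => hch i.1 (by omega), fun _ => ?_⟩, h0⟩
    exact al_symm ⟨fun hh => key.1 ⟨hh.1, h0.symm.trans hh.2⟩,
      fun hh => key.2 ⟨hh.1, h0.symm.trans hh.2⟩⟩
  · intro σ hσ
    funext k
    beta_reduce
    exact (dif_pos (by omega : (k : ℕ) < n+1)).trans (by rw [Fin.eta])
  · intro g hg
    rw [mem_WS] at hg
    funext k
    beta_reduce
    by_cases hk : (k : ℕ) < n+1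
    · rw [dif_pos hk]
    · rw [dif_neg hk]

      have hkk : k = ⟨n+1, by omega⟩ := Fin.ext (by simp; omega)
      rw [hkk]
      exact hg.1.trans hg.2.1.symm

lemma numCycSig_eq_tA (n : ℕ) : numCycSig (n+1) = tA (n+1) := by
  rw [numCycSig_eq, tA]
  exact Finset.sum_congr rfl fun s _ => (Amat_pow (n+1) s s).symm

/-- For all `m ≥ 1`, `ā(m) = 1 + (1−√2)^m + (1+√2)^m` as real numbers. -/
theorem numCycSig_closed_form (m : ℕ) (hm : 1 ≤ m) :
    (numCycSig m : ℝ) = 1 + (1 - Real.sqrt 2) ^ m + (1 + Real.sqrt 2) ^ m := by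
  obtain ⟨n, rfl⟩ : ∃ n, m = n + 1 := ⟨m - 1, by omega⟩
  rw [numCycSig_eq_tA]
  simpa [fR] using tA_closed n
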